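/- Consider the herding model with tail exponents α (true) and α̃ (misspecified), symmetric signal distributions. For any prior π ∈ (0,1), the probability conditional on the high state that all agents take the low action (immediate wrong herd), ξ(π) = ∏_n (1 − F_ℓ(1 − π̃ⁿ_h(1−π))), equals zero if and only if α̃ ≥ α. -/

import Mathlib

open Filter Topology

/-- In the (symmetric) herding model with true tail exponent `α` and
misspecified exponent `αt` — i.e. `Fℓ q = Θ(q^α)` near 0 and the misspecified public
beliefs `pt n` on the all-high-action path started at `1 − π` satisfy
`1 − pt n = Θ(n^{−1/αt})` — the probability, conditional on the high state, of an
immediate wrong herd, `ξ(π) = ∏_n (1 − Fℓ (1 − pt n))`, is zero iff `αt ≥ α`. -/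
theorem stmt15 (Fℓ : ℝ → ℝ) (pt : ℕ → ℝ) (α αt π : ℝ) (ξ : ℝ)
    (hα : 0 < α) (hαt : 0 < αt) (hπ : π ∈ Set.Ioo (0:ℝ) 1)
    (hFℓ01 : ∀ q ∈ Set.Icc (0:ℝ) 1, Fℓ q ∈ Set.Icc (0:ℝ) 1)
    (hFℓΘ : ∃ c C q₀ : ℝ, 0 < c ∧ c ≤ C ∧ 0 < q₀ ∧
      ∀ q ∈ Set.Ioo (0:ℝ) q₀, c * q ^ α ≤ Fℓ q ∧ Fℓ q ≤ C * q ^ α)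
    (hpt0 : pt 0 = 1 - π)
    (hpt : ∀ n, pt n ∈ Set.Ioo (0:ℝ) 1)
    (hptΘ : ∃ c C : ℝ, 0 < c ∧ c ≤ C ∧ ∀ n : ℕ, 1 ≤ n →
      c * (n : ℝ) ^ (-(1 / αt)) ≤ 1 - pt n ∧ 1 - pt n ≤ C * (n : ℝ) ^ (-(1 / αt)))
    (hlt1 : ∀ n, Fℓ (1 - pt n) < 1)
    (hξ : ξ = ∏' n : ℕ, (1 - Fℓ (1 - pt n))) :
    ξ = 0 ↔ α ≤ αt := by
  obtain ⟨c, C, q₀, hc, hcC, hq₀, hFb⟩ := hFℓΘ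
  obtain ⟨c₂, C₂, hc₂, hc₂C₂, hptb⟩ := hptΘ
  have hC : (0:ℝ) < C := lt_of_lt_of_le hc hcC
  have hC₂ : (0:ℝ) < C₂ := lt_of_lt_of_le hc₂ hc₂C₂
  set a : ℕ → ℝ := fun n => Fℓ (1 - pt n) with ha
  have hpt01 : ∀ n, (1 - pt n) ∈ Set.Ioo (0:ℝ) 1 := fun n =>
    ⟨by linarith [(hpt n).2], by linarith [(hpt n).1]⟩
  have ha0 : ∀ n, 0 ≤ a n := fun n =>
    (hFℓ01 _ ⟨le_of_lt (hpt01 n).1, le_of_lt (hpt01 n).2⟩).1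
  have hf0 : ∀ n, 0 < 1 - a n := fun n => by
    have := hlt1 n; simp only [ha]; linarith
  -- eventually `1 - pt n < q₀`
  have htend : Tendsto (fun n : ℕ => C₂ * (n:ℝ) ^ (-(1/αt))) atTop (𝓝 0) := by
    have h1 : Tendsto (fun x : ℝ => x ^ (-(1/αt))) atTop (𝓝 0) :=
      tendsto_rpow_neg_atTop (by positivity)
    have h2 : Tendsto (fun n : ℕ => ((n:ℝ)) ^ (-(1/αt))) atTop (𝓝 0) :=
      h1.comp tendsto_natCast_atTop_atTop
    simpa using h2.const_mul C₂
  have hev : ∀ᶠ n : ℕ in atTop, 1 - pt n < q₀ := by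
    filter_upwards [htend.eventually_lt_const hq₀, eventually_ge_atTop 1] with n h1 h2
    exact lt_of_le_of_lt ((hptb n h2).2) h1
  -- the two-sided bound on `a n`
  have hbound : ∀ᶠ n : ℕ in atTop,
      c * c₂ ^ α * (n:ℝ) ^ (-(α/αt)) ≤ a n ∧ a n ≤ C * C₂ ^ α * (n:ℝ) ^ (-(α/αt)) := by
    filter_upwards [hev, eventually_ge_atTop 1] with n hq hn
    have hn0 : (0:ℝ) ≤ (n:ℝ) := Nat.cast_nonneg n
    have hrpow0 : (0:ℝ) ≤ (n:ℝ) ^ (-(1/αt)) := Real.rpow_nonneg hn0 _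
    have hmem : (1 - pt n) ∈ Set.Ioo (0:ℝ) q₀ := ⟨(hpt01 n).1, hq⟩
    have hFb' := hFb _ hmem
    have hexp : ((n:ℝ) ^ (-(1/αt))) ^ α = (n:ℝ) ^ (-(α/αt)) := by
      rw [← Real.rpow_mul hn0]
      congr 1
      field_simp
    have hlow : c₂ ^ α * (n:ℝ) ^ (-(α/αt)) ≤ (1 - pt n) ^ α := by
      have := Real.rpow_le_rpow (by positivity) (hptb n hn).1 hα.le
      rwa [Real.mul_rpow hc₂.le hrpow0, hexp] at this
    have hhigh : (1 - pt n) ^ α ≤ C₂ ^ α * (n:ℝ) ^ (-(α/αt)) := by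
      have := Real.rpow_le_rpow (le_of_lt (hpt01 n).1) (hptb n hn).2 hα.le
      rwa [Real.mul_rpow hC₂.le hrpow0, hexp] at this
    constructor
    · calc c * c₂ ^ α * (n:ℝ) ^ (-(α/αt)) = c * (c₂ ^ α * (n:ℝ) ^ (-(α/αt))) := by ring
        _ ≤ c * (1 - pt n) ^ α := by
            exact mul_le_mul_of_nonneg_left hlow hc.le
        _ ≤ a n := hFb'.1
    · calc a n ≤ C * (1 - pt n) ^ α := hFb'.2
        _ ≤ C * (C₂ ^ α * (n:ℝ) ^ (-(α/αt))) := mul_le_mul_of_nonneg_left hhigh hC.le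
        _ = C * C₂ ^ α * (n:ℝ) ^ (-(α/αt)) := by ring
  constructor
  · -- ξ = 0 → α ≤ αt, by contraposition
    intro h0
    by_contra hgt
    push_neg at hgt  -- αt < α
    -- a is summable
    have hsum_rpow : Summable (fun n : ℕ => C * C₂ ^ α * (n:ℝ) ^ (-(α/αt))) := by
      apply Summable.mul_left
      rw [Real.summable_nat_rpow]
      have : (1:ℝ) < α / αt := (one_lt_div hαt).2 hgt
      linarith
    have hsa : Summable a := by
      apply Summable.of_norm_bounded_eventually hsum_rpow
      rw [Nat.cofinite_eq_atTop]
      filter_upwards [hbound] with n hn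
      rw [Real.norm_eq_abs, abs_of_nonneg (ha0 n)]
      exact hn.2
    -- logs are summable
    have hO : (fun x : ℝ => Real.log (1 - x)) =O[nhds 0] id := by
      have hdiff : DifferentiableAt ℝ (fun x : ℝ => Real.log (1 - x)) 0 := by
        apply DifferentiableAt.log
        · fun_prop
        · norm_num
      have h := hdiff.isBigO_sub; simp at h; exact h
    have hslog : Summable (fun n => Real.log (1 - a n)) := hO.comp_summable hsa
    have hprod : HasProd (fun n => 1 - a n)
        (Real.exp (∑' n, Real.log (1 - a n))) := by
      have h := hslog.hasSum.rexp
      have heq : (Real.exp ∘ fun n => Real.log (1 - a n)) = fun n => 1 - a n :=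
        funext fun n => Real.exp_log (hf0 n)
      rwa [heq] at h
    have : ξ = Real.exp (∑' n, Real.log (1 - a n)) := by
      rw [hξ]; exact hprod.tprod_eq
    exact Real.exp_ne_zero _ (this ▸ h0)
  · -- α ≤ αt → ξ = 0
    intro hle
    -- a is not summable
    have hc₁ : (0:ℝ) < c * c₂ ^ α := by positivity
    have hnsa : ¬ Summable a := by
      intro hsa
      have hsum_inv : Summable (fun n : ℕ => c * c₂ ^ α * (n:ℝ)⁻¹) := by
        apply Summable.of_norm_bounded_eventually hsa
        rw [Nat.cofinite_eq_atTop]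
        filter_upwards [hbound, eventually_ge_atTop 1] with n hn hn1
        have hn1' : (1:ℝ) ≤ (n:ℝ) := by exact_mod_cast hn1
        have hmono : (n:ℝ) ^ (-(1:ℝ)) ≤ (n:ℝ) ^ (-(α/αt)) := by
          apply Real.rpow_le_rpow_of_exponent_le hn1'
          have : α / αt ≤ 1 := (div_le_one hαt).2 hle
          linarith
        rw [Real.norm_eq_abs, abs_of_nonneg (by positivity)]
        calc c * c₂ ^ α * (n:ℝ)⁻¹ = c * c₂ ^ α * (n:ℝ) ^ (-(1:ℝ)) := by
              rw [Real.rpow_neg_one]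
          _ ≤ c * c₂ ^ α * (n:ℝ) ^ (-(α/αt)) := by
              exact mul_le_mul_of_nonneg_left hmono hc₁.le
          _ ≤ a n := hn.1
      have : Summable (fun n : ℕ => (n:ℝ)⁻¹) := by
        have h := hsum_inv.mul_left (c * c₂ ^ α)⁻¹
        refine h.congr fun n => ?_
        field_simp
      exact Real.not_summable_natCast_inv this
    have hpartial : Tendsto (fun n : ℕ => ∑ i ∈ Finset.range n, a i) atTop atTop :=
      (not_summable_iff_tendsto_nat_atTop_of_nonneg ha0).1 hnsa
    -- finset sums tend to atTop
    have hsnet : Tendsto (fun s : Finset ℕ => ∑ i ∈ s, a i) atTop atTop := by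
      rw [tendsto_atTop]
      intro b
      obtain ⟨N, hN⟩ := (tendsto_atTop.1 hpartial b).exists
      filter_upwards [eventually_ge_atTop (Finset.range N)] with s hs
      calc b ≤ ∑ i ∈ Finset.range N, a i := hN
        _ ≤ ∑ i ∈ s, a i := Finset.sum_le_sum_of_subset_of_nonneg hs fun i _ _ => ha0 i
    have hprod0 : HasProd (fun n => 1 - a n) 0 := by
      unfold HasProd
      apply tendsto_of_tendsto_of_tendsto_of_le_of_le
        (tendsto_const_nhds) (Real.tendsto_exp_neg_atTop_nhds_zero.comp hsnet)
      · intro s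
        exact Finset.prod_nonneg fun i _ => (hf0 i).le
      · intro s
        calc ∏ i ∈ s, (1 - a i) ≤ ∏ i ∈ s, Real.exp (-a i) := by
              apply Finset.prod_le_prod (fun i _ => (hf0 i).le)
              intro i _
              have := Real.add_one_le_exp (-a i)
              linarith
          _ = Real.exp (-∑ i ∈ s, a i) := by
              rw [← Real.exp_sum]
              simp
    rw [hξ]
    exact hprod0.tprod_eq
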